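/- For every real number κ ≠ 0, the function u_κ(x) = (2 i κ x e^{−iκx} / (Γ(1 − i/(2κ)) · Γ(1 + i/(2κ)))) · ∫_0^1 e^{2iκxs} · exp((i/(2κ))(log s − log(1−s))) ds satisfies the dimensionless radial Coulomb equation u_κ''(x) + (1/x + κ²) · u_κ(x) = 0 for every real x > 0. -/

import Mathlib

open MeasureTheory Real Complex

/-- The Whittaker radial solution `u_κ(x)`. -/
noncomputable def whittakerU (κ : ℝ) (x : ℝ) : ℂ :=
  (2 * Complex.I * (κ : ℂ) * (x : ℂ) * Complex.exp (-Complex.I * κ * x) /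
      (Complex.Gamma (1 - Complex.I / (2 * κ)) * Complex.Gamma (1 + Complex.I / (2 * κ)))) *
    ∫ s in Set.Ioo (0 : ℝ) 1,
      Complex.exp (2 * Complex.I * κ * x * s) *
        Complex.exp ((Complex.I / (2 * κ)) * ((Real.log s : ℂ) - (Real.log (1 - s) : ℂ)))

namespace WhittakerAux

noncomputable def gg (κ : ℝ) (s : ℝ) : ℂ :=
  Complex.exp ((Complex.I / (2 * κ)) * ((Real.log s : ℂ) - (Real.log (1 - s) : ℂ)))

noncomputable def kern (κ x : ℝ) (n : ℕ) (s : ℝ) : ℂ :=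
  (2 * Complex.I * κ * s)^n * Complex.exp (2 * Complex.I * κ * x * s) * gg κ s

noncomputable def ff (κ : ℝ) (n : ℕ) (x : ℝ) : ℂ := ∫ s in Set.Ioo (0:ℝ) 1, kern κ x n s

noncomputable def GG (κ x : ℝ) (s : ℝ) : ℂ :=
  (-2 * Complex.I * κ) * ((s:ℂ) * (1 - (s:ℂ))) * Complex.exp (2 * Complex.I * κ * x * s) * gg κ s

noncomputable def cc (κ : ℝ) : ℂ :=
  2 * Complex.I * κ / (Complex.Gamma (1 - Complex.I / (2 * κ)) * Complex.Gamma (1 + Complex.I / (2 * κ)))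

lemma norm_gg (κ s : ℝ) : ‖gg κ s‖ = 1 := by
  rw [gg, Complex.norm_exp]
  have : ((Complex.I / (2 * (κ:ℂ))) * ((Real.log s : ℂ) - (Real.log (1 - s) : ℂ))).re = 0 := by
    simp [Complex.div_re, Complex.mul_re, Complex.sub_re, Complex.sub_im]
  rw [this, Real.exp_zero]

lemma norm_exp_axis (c x s : ℝ) : ‖Complex.exp (2 * Complex.I * c * x * s)‖ = 1 := by
  rw [Complex.norm_exp]
  have : (2 * Complex.I * (c:ℂ) * x * s).re = 0 := by simp
  rw [this, Real.exp_zero]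

lemma norm_kern_le (κ x : ℝ) (n : ℕ) {s : ℝ} (hs : s ∈ Set.Ioo (0:ℝ) 1) :
    ‖kern κ x n s‖ ≤ (2 * |κ|)^n := by
  rw [kern, norm_mul, norm_mul, norm_gg, norm_exp_axis, mul_one, mul_one, norm_pow]
  refine pow_le_pow_left₀ (norm_nonneg _) ?_ n
  have : ‖2 * Complex.I * (κ:ℂ) * s‖ = 2 * |κ| * |s| := by
    simp [norm_mul, Complex.norm_real, Real.norm_eq_abs]
  rw [this]
  nlinarith [abs_nonneg κ, hs.1, hs.2, abs_of_pos hs.1]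

lemma contOn_gg (κ : ℝ) : ContinuousOn (gg κ) (Set.Ioo 0 1) := by
  refine Complex.continuous_exp.comp_continuousOn ?_
  refine ContinuousOn.mul continuousOn_const ?_
  refine ContinuousOn.sub ?_ ?_
  · exact Complex.continuous_ofReal.comp_continuousOn
      (fun s hs => (Real.continuousAt_log hs.1.ne').continuousWithinAt)
  · exact Complex.continuous_ofReal.comp_continuousOn
      (fun s hs => ((Real.continuousAt_log (by linarith [hs.2] : (1:ℝ) - s ≠ 0)).comp
        (continuous_const.sub continuous_id).continuousAt).continuousWithinAt)

lemma contOn_kern (κ x : ℝ) (n : ℕ) : ContinuousOn (kern κ x n) (Set.Ioo 0 1) := by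
  refine ContinuousOn.mul (ContinuousOn.mul ?_ ?_) (contOn_gg κ)
  · exact ((continuous_const.mul Complex.continuous_ofReal).pow n).continuousOn
  · exact (Complex.continuous_exp.comp (continuous_const.mul Complex.continuous_ofReal)).continuousOn

lemma integrableOn_kern (κ x : ℝ) (n : ℕ) :
    IntegrableOn (kern κ x n) (Set.Ioo 0 1) := by
  have hm : AEStronglyMeasurable (kern κ x n) (volume.restrict (Set.Ioo (0:ℝ) 1)) :=
    (contOn_kern κ x n).aestronglyMeasurable measurableSet_Ioo
  refine ⟨hm, ?_⟩
  refine MeasureTheory.HasFiniteIntegral.restrict_of_bounded (C := (2*|κ|)^n)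
    (measure_Ioo_lt_top) ?_
  exact (ae_restrict_iff' measurableSet_Ioo).2 (ae_of_all _ fun s hs => norm_kern_le κ x n hs)

lemma hasDerivAt_kern (κ : ℝ) (n : ℕ) (s x : ℝ) :
    HasDerivAt (fun x => kern κ x n s) (kern κ x (n+1) s) x := by
  have h1 : HasDerivAt (fun x : ℝ => Complex.exp (2 * Complex.I * κ * x * s))
      ((2 * Complex.I * κ * s) * Complex.exp (2 * Complex.I * κ * x * s)) x := by
    have hi : HasDerivAt (fun x : ℝ => 2 * Complex.I * (κ:ℂ) * (x:ℝ) * (s:ℝ))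
        (2 * Complex.I * κ * s) x := by
      have := ((Complex.ofRealCLM.hasDerivAt (x := x)).const_mul
        (2 * Complex.I * (κ:ℂ))).mul_const (s:ℂ)
      simpa using this
    simpa [mul_comm] using hi.cexp
  have := (h1.const_mul ((2 * Complex.I * (κ:ℂ) * s)^n)).mul_const (gg κ s)
  simp only [kern]
  convert this using 1
  · rfl
  ring

lemma hasDerivAt_ff (κ : ℝ) (n : ℕ) (x : ℝ) :
    HasDerivAt (ff κ n) (ff κ (n+1) x) x := by
  have := hasDerivAt_integral_of_dominated_loc_of_deriv_le (μ := volume.restrict (Set.Ioo (0:ℝ) 1))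
    (F := fun x s => kern κ x n s) (F' := fun x s => kern κ x (n+1) s)
    (x₀ := x) (bound := fun _ => (2*|κ|)^(n+1)) (Metric.ball_mem_nhds x one_pos)
    (Filter.Eventually.of_forall fun y =>
      (contOn_kern κ y n).aestronglyMeasurable measurableSet_Ioo)
    (integrableOn_kern κ x n)
    ((contOn_kern κ x (n+1)).aestronglyMeasurable measurableSet_Ioo)
    ((ae_restrict_iff' measurableSet_Ioo).2 (ae_of_all _ fun s hs y _ => norm_kern_le κ y (n+1) hs))
    (integrable_const _)
    (ae_of_all _ fun s y _ => hasDerivAt_kern κ n s y)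
  exact this.2

lemma hasDerivAt_gg (κ : ℝ) {s : ℝ} (hs : s ∈ Set.Ioo (0:ℝ) 1) :
    HasDerivAt (gg κ) (gg κ s * ((Complex.I / (2 * κ)) * (((1/s : ℝ) : ℂ) + ((1/(1-s) : ℝ) : ℂ)))) s := by
  have h0 : s ≠ 0 := hs.1.ne'
  have h1 : (1:ℝ) - s ≠ 0 := by have := hs.2; intro h; linarith [h]
  have hl1 : HasDerivAt (fun s : ℝ => ((Real.log s : ℝ) : ℂ)) ((1/s : ℝ) : ℂ) s := by
    have := (Real.hasDerivAt_log h0).ofReal_comp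
    simpa [one_div] using this
  have hl2 : HasDerivAt (fun s : ℝ => ((Real.log (1 - s) : ℝ) : ℂ)) (-((1/(1-s) : ℝ) : ℂ)) s := by
    have hinner : HasDerivAt (fun s : ℝ => 1 - s) (-1 : ℝ) s := by
      simpa using (hasDerivAt_id s).const_sub 1
    have := ((Real.hasDerivAt_log h1).comp s hinner).ofReal_comp
    push_cast
    convert this using 1
    · rfl
    push_cast
    field_simp
  have hin : HasDerivAt (fun s : ℝ => (Complex.I / (2 * κ)) * ((Real.log s : ℂ) - (Real.log (1 - s) : ℂ)))
      ((Complex.I / (2 * κ)) * (((1/s : ℝ) : ℂ) + ((1/(1-s) : ℝ) : ℂ))) s := by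
    have := (hl1.sub hl2).const_mul (Complex.I / (2 * (κ:ℂ)))
    simpa [sub_neg_eq_add] using this
  have key : HasDerivAt
      (fun s : ℝ => Complex.exp ((Complex.I / (2 * κ)) * ((Real.log s : ℂ) - (Real.log (1 - s) : ℂ))))
      (Complex.exp ((Complex.I / (2 * κ)) * ((Real.log s : ℂ) - (Real.log (1 - s) : ℂ))) *
        ((Complex.I / (2 * κ)) * (((1/s : ℝ) : ℂ) + ((1/(1-s) : ℝ) : ℂ)))) s := by
    exact hin.cexp
  exact key

lemma hasDerivAt_GG (κ x : ℝ) (hκ : κ ≠ 0) {s : ℝ} (hs : s ∈ Set.Ioo (0:ℝ) 1) :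
    HasDerivAt (GG κ x)
      ((x:ℂ) * kern κ x 2 s + (2 - 2*Complex.I*κ*x) * kern κ x 1 s
        + (1 - 2*Complex.I*κ) * kern κ x 0 s) s := by
  have h0 : (s:ℂ) ≠ 0 := by exact_mod_cast hs.1.ne'
  have h0r : s ≠ 0 := hs.1.ne'
  have h1r : (1:ℝ) - s ≠ 0 := by have := hs.2; intro h; linarith [h]
  have h1 : (1:ℂ) - (s:ℂ) ≠ 0 := by
    intro h
    apply h1r
    exact_mod_cast (by push_cast at h ⊢; exact h : ((1 - s : ℝ):ℂ) = 0)
  have hκc : (κ:ℂ) ≠ 0 := by exact_mod_cast hκ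
  have hid : HasDerivAt (fun s : ℝ => (s:ℂ)) 1 s := by
    exact Complex.ofRealCLM.hasDerivAt (x := s)
  have hA : HasDerivAt (fun s : ℝ => (s:ℂ) * (1 - (s:ℂ))) (1 - 2*(s:ℂ)) s := by
    have := hid.mul (hid.const_sub 1)
    refine this.congr_deriv ?_
    ring
  have hB : HasDerivAt (fun s : ℝ => Complex.exp (2 * Complex.I * κ * x * s))
      ((2 * Complex.I * κ * x) * Complex.exp (2 * Complex.I * κ * x * s)) s := by
    have := (hid.const_mul (2 * Complex.I * (κ:ℂ) * x)).cexp
    simpa [mul_comm] using this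
  have hC := hasDerivAt_gg κ hs
  have hD := ((hA.mul hB).mul hC).const_mul (-2 * Complex.I * (κ:ℂ))
  have key : HasDerivAt
      (fun t : ℝ => (-2 * Complex.I * (κ:ℂ)) * ((t:ℂ) * (1 - (t:ℂ))) *
          Complex.exp (2 * Complex.I * κ * x * t) * gg κ t)
      ((-2 * Complex.I * (κ:ℂ)) *
        (((1 - 2*(s:ℂ)) * Complex.exp (2 * Complex.I * κ * x * s)
          + (s:ℂ) * (1 - (s:ℂ)) * ((2 * Complex.I * κ * x) * Complex.exp (2 * Complex.I * κ * x * s))) * gg κ s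
          + ((s:ℂ) * (1 - (s:ℂ)) * Complex.exp (2 * Complex.I * κ * x * s)) *
            (gg κ s * ((Complex.I / (2 * κ)) * (((1/s : ℝ) : ℂ) + ((1/(1-s) : ℝ) : ℂ)))))) s := by
    convert hD using 1
    · rfl
    · funext t; simp only [Pi.mul_apply]; ring
    · rfl
  have : HasDerivAt (GG κ x)
      ((-2 * Complex.I * (κ:ℂ)) *
        (((1 - 2*(s:ℂ)) * Complex.exp (2 * Complex.I * κ * x * s)
          + (s:ℂ) * (1 - (s:ℂ)) * ((2 * Complex.I * κ * x) * Complex.exp (2 * Complex.I * κ * x * s))) * gg κ s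
          + ((s:ℂ) * (1 - (s:ℂ)) * Complex.exp (2 * Complex.I * κ * x * s)) *
            (gg κ s * ((Complex.I / (2 * κ)) * (((1/s : ℝ) : ℂ) + ((1/(1-s) : ℝ) : ℂ)))))) s := key
  convert this using 1
  simp only [kern]
  push_cast
  field_simp
  ring_nf
  simp only [Complex.I_sq]
  ring

lemma norm_GG (κ x s : ℝ) : ‖GG κ x s‖ = 2 * |κ| * |s| * |1 - s| := by
  have hc : ((1:ℂ) - (s:ℂ)) = ((1 - s : ℝ) : ℂ) := by push_cast; ring
  rw [GG, hc, norm_mul, norm_mul, norm_mul, norm_gg, norm_exp_axis, mul_one, mul_one]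
  simp [norm_mul, Real.norm_eq_abs, Complex.norm_real, abs_mul]
  rw [hc, Complex.norm_real, Real.norm_eq_abs]
  ring

lemma cont_bound (κ : ℝ) : Continuous (fun s : ℝ => 2 * |κ| * |s| * |1 - s|) := by
  fun_prop

lemma tendsto_GG_zero (κ x : ℝ) :
    Filter.Tendsto (GG κ x) (nhdsWithin 0 (Set.Ioi 0)) (nhds 0) := by
  apply squeeze_zero_norm' (Filter.Eventually.of_forall fun s => (norm_GG κ x s).le)
  have h := ((cont_bound κ).tendsto 0).mono_left (nhdsWithin_le_nhds (s := Set.Ioi (0:ℝ)))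
  simpa using h

lemma tendsto_GG_one (κ x : ℝ) :
    Filter.Tendsto (GG κ x) (nhdsWithin 1 (Set.Iio 1)) (nhds 0) := by
  apply squeeze_zero_norm' (Filter.Eventually.of_forall fun s => (norm_GG κ x s).le)
  have h := ((cont_bound κ).tendsto 1).mono_left (nhdsWithin_le_nhds (s := Set.Iio (1:ℝ)))
  simpa using h

lemma combo_integral (κ x : ℝ) (hκ : κ ≠ 0) :
    ∫ s in Set.Ioo (0:ℝ) 1,
      ((x:ℂ) * kern κ x 2 s + (2 - 2*Complex.I*κ*x) * kern κ x 1 s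
        + (1 - 2*Complex.I*κ) * kern κ x 0 s) = 0 := by
  have hint : IntegrableOn (fun s => (x:ℂ) * kern κ x 2 s + (2 - 2*Complex.I*κ*x) * kern κ x 1 s
      + (1 - 2*Complex.I*κ) * kern κ x 0 s) (Set.Ioo (0:ℝ) 1) :=
    (((integrableOn_kern κ x 2).const_mul _).add ((integrableOn_kern κ x 1).const_mul _)).add
      ((integrableOn_kern κ x 0).const_mul _)
  have hii : IntervalIntegrable (fun s => (x:ℂ) * kern κ x 2 s + (2 - 2*Complex.I*κ*x) * kern κ x 1 s
      + (1 - 2*Complex.I*κ) * kern κ x 0 s) volume 0 1 := by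
    rw [intervalIntegrable_iff_integrableOn_Ioo_of_le (by norm_num)]
    exact hint
  have := intervalIntegral.integral_eq_sub_of_hasDerivAt_of_tendsto (f := GG κ x)
    (by norm_num : (0:ℝ) < 1) (fun s hs => hasDerivAt_GG κ x hκ hs) hii
    (tendsto_GG_zero κ x) (tendsto_GG_one κ x)
  rw [intervalIntegral.integral_of_le (by norm_num : (0:ℝ) ≤ 1),
    MeasureTheory.integral_Ioc_eq_integral_Ioo] at this
  rw [this, sub_self]

lemma ff_combo (κ x : ℝ) (hκ : κ ≠ 0) :
    (x:ℂ) * ff κ 2 x + (2 - 2*Complex.I*κ*x) * ff κ 1 x + (1 - 2*Complex.I*κ) * ff κ 0 x = 0 := by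
  have h2 := (integrableOn_kern κ x 2).const_mul ((x:ℂ))
  have h1 := (integrableOn_kern κ x 1).const_mul ((2 - 2*Complex.I*(κ:ℂ)*x))
  have h0 := (integrableOn_kern κ x 0).const_mul ((1 - 2*Complex.I*(κ:ℂ)))
  have h21 : Integrable (fun s => (x:ℂ) * kern κ x 2 s + (2 - 2*Complex.I*(κ:ℂ)*x) * kern κ x 1 s)
      (volume.restrict (Set.Ioo (0:ℝ) 1)) := h2.add h1
  have key := combo_integral κ x hκ
  rw [MeasureTheory.integral_add h21 h0, MeasureTheory.integral_add h2 h1,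
    MeasureTheory.integral_const_mul, MeasureTheory.integral_const_mul,
    MeasureTheory.integral_const_mul] at key
  rw [ff, ff, ff]
  exact key

end WhittakerAux

open WhittakerAux

namespace WhittakerAux

lemma whittakerU_eq (κ : ℝ) :
    whittakerU κ = fun x : ℝ => cc κ * ((x:ℂ) * Complex.exp (-Complex.I*κ*x) * ff κ 0 x) := by
  funext x
  rw [whittakerU, cc, ff]
  have : ∀ s : ℝ, kern κ x 0 s = Complex.exp (2 * Complex.I * κ * x * s) *
      Complex.exp ((Complex.I / (2 * κ)) * ((Real.log s : ℂ) - (Real.log (1 - s) : ℂ))) := by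
    intro s; rw [kern, gg, pow_zero, one_mul]
  simp_rw [this]
  ring

lemma hasDerivAt_u (κ : ℝ) (x : ℝ) :
    HasDerivAt (whittakerU κ)
      (cc κ * (Complex.exp (-Complex.I*κ*x) *
        (ff κ 0 x + (x:ℂ) * ff κ 1 x - Complex.I*κ*x * ff κ 0 x))) x := by
  rw [whittakerU_eq κ]
  have hid : HasDerivAt (fun x : ℝ => (x:ℂ)) 1 x := by
    exact Complex.ofRealCLM.hasDerivAt (x := x)
  have hE : HasDerivAt (fun x : ℝ => Complex.exp (-Complex.I*κ*x))
      ((-Complex.I*κ) * Complex.exp (-Complex.I*κ*x)) x := by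
    have := (hid.const_mul (-Complex.I*(κ:ℂ))).cexp
    simpa [mul_comm] using this
  have := ((hid.mul hE).mul (hasDerivAt_ff κ 0 x)).const_mul (cc κ)
  refine this.congr_deriv ?_
  simp only [Pi.mul_apply]
  ring

noncomputable def U1 (κ : ℝ) (x : ℝ) : ℂ :=
  cc κ * (Complex.exp (-Complex.I*κ*x) *
    (ff κ 0 x + (x:ℂ) * ff κ 1 x - Complex.I*κ*x * ff κ 0 x))

lemma hasDerivAt_U1 (κ : ℝ) (x : ℝ) :
    HasDerivAt (U1 κ)
      (cc κ * (Complex.exp (-Complex.I*κ*x) *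
        ((x:ℂ) * ff κ 2 x + (2 - 2*Complex.I*κ*x) * ff κ 1 x
          + (-2*Complex.I*κ - κ^2*x) * ff κ 0 x))) x := by
  have hid : HasDerivAt (fun x : ℝ => (x:ℂ)) 1 x := by
    exact Complex.ofRealCLM.hasDerivAt (x := x)
  have hE : HasDerivAt (fun x : ℝ => Complex.exp (-Complex.I*κ*x))
      ((-Complex.I*κ) * Complex.exp (-Complex.I*κ*x)) x := by
    have := (hid.const_mul (-Complex.I*(κ:ℂ))).cexp
    simpa [mul_comm] using this
  have h0 := hasDerivAt_ff κ 0 x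
  have h1 := hasDerivAt_ff κ 1 x
  have hin : HasDerivAt (fun x : ℝ => ff κ 0 x + (x:ℂ) * ff κ 1 x - Complex.I*κ*x * ff κ 0 x)
      (ff κ 1 x + (1 * ff κ 1 x + (x:ℂ) * ff κ 2 x)
        - ((Complex.I*κ*1) * ff κ 0 x + (Complex.I*κ*x) * ff κ 1 x)) x := by
    exact (h0.add (hid.mul h1)).sub ((hid.const_mul (Complex.I*(κ:ℂ))).mul h0)
  have := (hE.mul hin).const_mul (cc κ)
  refine this.congr_deriv ?_
  have hI2 : Complex.I * Complex.I = -1 := Complex.I_mul_I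
  ring_nf
  simp only [Complex.I_sq]
  ring

end WhittakerAux

/-- `u_κ` satisfies the dimensionless radial Coulomb equation
`u'' + (1/x + κ²) u = 0` for `x > 0`. -/
theorem whittakerU_satisfies_coulomb (κ : ℝ) (hκ : κ ≠ 0) :
    ∀ x : ℝ, 0 < x →
      deriv (deriv (whittakerU κ)) x + (1 / (x : ℂ) + (κ : ℂ) ^ 2) * whittakerU κ x = 0 := by
  intro x hx
  have hxc : (x:ℂ) ≠ 0 := by exact_mod_cast hx.ne'
  have hd1 : deriv (whittakerU κ) = U1 κ := funext fun y => (hasDerivAt_u κ y).deriv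
  have hd2 : deriv (deriv (whittakerU κ)) x
      = cc κ * (Complex.exp (-Complex.I*κ*x) *
        ((x:ℂ) * ff κ 2 x + (2 - 2*Complex.I*κ*x) * ff κ 1 x
          + (-2*Complex.I*κ - κ^2*x) * ff κ 0 x)) := by
    rw [hd1]; exact (hasDerivAt_U1 κ x).deriv
  have hu : whittakerU κ x = cc κ * ((x:ℂ) * Complex.exp (-Complex.I*κ*x) * ff κ 0 x) := by
    rw [whittakerU_eq κ]
  rw [hd2, hu]
  have key := ff_combo κ x hκ
  have : cc κ * (Complex.exp (-Complex.I*κ*x) *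
        ((x:ℂ) * ff κ 2 x + (2 - 2*Complex.I*κ*x) * ff κ 1 x
          + (-2*Complex.I*κ - κ^2*x) * ff κ 0 x))
      + (1 / (x : ℂ) + (κ : ℂ) ^ 2) * (cc κ * ((x:ℂ) * Complex.exp (-Complex.I*κ*x) * ff κ 0 x))
      = cc κ * Complex.exp (-Complex.I*κ*x) *
        ((x:ℂ) * ff κ 2 x + (2 - 2*Complex.I*κ*x) * ff κ 1 x
          + (1 - 2*Complex.I*κ) * ff κ 0 x) := by
    field_simp
    ring
  rw [this, key, mul_zero]
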